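/- Let {B_k}_{k=1}^∞ be a sequence of subsets of the space S^n of n×n real symmetric matrices, and let J ⊆ S^n_+ be a closed convex cone with ⋂_{k=1}^∞ J_+(B_k) = J, where J_+(B) = {X ∈ S^n_+ : ⟨B, X⟩ ≥ 0 for all B ∈ B}. Then ⋂_{m=1}^∞ co(Γ^n ∩ (⋂_{k=1}^m J_+(B_k))) = co(Γ^n ∩ J). -/

import Mathlib

open Matrix
open Filter Topology

/-- Γ^n = {x xᵀ : x ∈ ℝ^n}. -/
def Gamma (n : ℕ) : Set (Matrix (Fin n) (Fin n) ℝ) :=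
  {X | ∃ x : Fin n → ℝ, X = vecMulVec x x}

/-- The cone of n×n real PSD matrices. -/
def PSDcone (n : ℕ) : Set (Matrix (Fin n) (Fin n) ℝ) := {X | X.PosSemidef}

/-- J_+(𝓑) = {X ∈ S^n_+ : ⟨B, X⟩ ≥ 0 for every B ∈ 𝓑}, where ⟨B,X⟩ = trace(BX). -/
def JpFam {n : ℕ} (𝓑 : Set (Matrix (Fin n) (Fin n) ℝ)) : Set (Matrix (Fin n) (Fin n) ℝ) :=
  {X | X.PosSemidef ∧ ∀ B ∈ 𝓑, 0 ≤ (B * X).trace}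

section aux

variable {n : ℕ}

lemma vecMulVec_self_posSemidef (x : Fin n → ℝ) : (vecMulVec x x).PosSemidef := by
  have h := posSemidef_conjTranspose_mul_self (replicateRow Unit x)
  rwa [conjTranspose_replicateRow, show star x = x from funext fun i => star_trivial _,
    ← vecMulVec_eq Unit] at h

lemma vecMulVec_self_trace (x : Fin n → ℝ) : (vecMulVec x x).trace = ∑ j, (x j) ^ 2 := by
  simp [Matrix.trace, Matrix.diag, vecMulVec_apply, sq]

lemma posSemidef_smul {X : Matrix (Fin n) (Fin n) ℝ} (hX : X.PosSemidef) {c : ℝ} (hc : 0 ≤ c) :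
    (c • X).PosSemidef := by
  constructor
  · unfold Matrix.IsHermitian
    rw [conjTranspose_smul, hX.1, star_trivial]
  · intro y
    exact (hX.smul hc).2 y

lemma zero_mem_Gamma : (0 : Matrix (Fin n) (Fin n) ℝ) ∈ Gamma n :=
  ⟨0, by ext i j; simp [vecMulVec_apply]⟩

lemma smul_mem_Gamma {Z : Matrix (Fin n) (Fin n) ℝ} (hZ : Z ∈ Gamma n) {c : ℝ} (hc : 0 ≤ c) :
    c • Z ∈ Gamma n := by
  obtain ⟨x, rfl⟩ := hZ
  refine ⟨Real.sqrt c • x, ?_⟩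
  ext i j
  simp only [Matrix.smul_apply, vecMulVec_apply, Pi.smul_apply, smul_eq_mul]
  have h : Real.sqrt c * Real.sqrt c = c := Real.mul_self_sqrt hc
  linear_combination (- x i * x j) * h

lemma zero_mem_JpFam (𝓑 : Set (Matrix (Fin n) (Fin n) ℝ)) :
    (0 : Matrix (Fin n) (Fin n) ℝ) ∈ JpFam 𝓑 :=
  ⟨Matrix.PosSemidef.zero, fun B _ => by simp⟩

lemma smul_mem_JpFam {𝓑 : Set (Matrix (Fin n) (Fin n) ℝ)} {Z : Matrix (Fin n) (Fin n) ℝ}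
    (hZ : Z ∈ JpFam 𝓑) {c : ℝ} (hc : 0 ≤ c) : c • Z ∈ JpFam 𝓑 := by
  refine ⟨posSemidef_smul hZ.1 hc, fun B hB => ?_⟩
  rw [Matrix.mul_smul, Matrix.trace_smul, smul_eq_mul]
  exact mul_nonneg hc (hZ.2 B hB)

lemma lemA {s : Set (Matrix (Fin n) (Fin n) ℝ)} (h0 : 0 ∈ s)
    (hcone : ∀ z ∈ s, ∀ c : ℝ, 0 ≤ c → c • z ∈ s) {X : Matrix (Fin n) (Fin n) ℝ}
    (hX : X ∈ convexHull ℝ s) :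
    ∃ z : Fin (Module.finrank ℝ (Matrix (Fin n) (Fin n) ℝ) + 1) → Matrix (Fin n) (Fin n) ℝ,
      (∀ i, z i ∈ s) ∧ ∑ i, z i = X := by
  obtain ⟨ι, hfin, zz, w, hrange, hai, hwpos, hwsum, hsum⟩ :=
    eq_pos_convex_span_of_mem_convexHull hX
  set N := Module.finrank ℝ (Matrix (Fin n) (Fin n) ℝ) + 1 with hN
  set c := Fintype.card ι with hc
  have hcN : c ≤ N := by
    refine le_trans hai.card_le_finrank_succ ?_
    exact Nat.add_le_add_right (Submodule.finrank_le _) 1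
  set e := Fintype.equivFin ι with he
  set g : ℕ → Matrix (Fin n) (Fin n) ℝ :=
    fun i => if h : i < c then w (e.symm ⟨i, h⟩) • zz (e.symm ⟨i, h⟩) else 0 with hg
  refine ⟨fun i => g i, fun i => ?_, ?_⟩
  · by_cases h : (i : ℕ) < c
    · simp only [hg, dif_pos h]
      exact hcone _ (hrange (Set.mem_range_self _)) _ (hwpos _).le
    · simp only [hg, dif_neg h]; exact h0
  · calc ∑ i : Fin N, g i = ∑ i ∈ Finset.range N, g i := Fin.sum_univ_eq_sum_range g N
    _ = ∑ i ∈ Finset.range c, g i := by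
        refine (Finset.sum_subset (Finset.range_subset_range.2 hcN) ?_).symm
        intro i _ hi
        simp only [Finset.mem_range, not_lt] at hi
        simp only [hg, dif_neg (not_lt.2 hi)]
    _ = ∑ i : Fin c, g i := (Fin.sum_univ_eq_sum_range g c).symm
    _ = ∑ i : Fin c, w (e.symm i) • zz (e.symm i) := by
        refine Finset.sum_congr rfl fun i _ => ?_
        simp only [hg, dif_pos i.isLt]
        rfl
    _ = ∑ j : ι, w j • zz j := by
        show ∑ i : Fin (Fintype.card ι), w (e.symm i) • zz (e.symm i) = _
        exact Equiv.sum_comp e.symm fun j => w j • zz j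
    _ = X := hsum

end aux

theorem stmt2 {n : ℕ} (Bs : ℕ → Set (Matrix (Fin n) (Fin n) ℝ))
    (J : Set (Matrix (Fin n) (Fin n) ℝ))
    (hJclosed : IsClosed J) (hJconv : Convex ℝ J)
    (hJcone : ∀ X ∈ J, ∀ c : ℝ, 0 ≤ c → c • X ∈ J)
    (hJsub : J ⊆ PSDcone n)
    (hinter : (⋂ k : ℕ, JpFam (Bs k)) = J) :
    (⋂ m : ℕ, convexHull ℝ (Gamma n ∩ ⋂ k ≤ m, JpFam (Bs k)))
      = convexHull ℝ (Gamma n ∩ J) := by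
  apply Set.Subset.antisymm
  swap
  · -- easy direction
    refine Set.subset_iInter fun m => convexHull_mono ?_
    refine Set.inter_subset_inter_right _ fun Y hY => ?_
    rw [← hinter] at hY
    exact Set.mem_iInter₂.2 fun k _ => Set.mem_iInter.1 hY k
  intro X hX
  set N := Module.finrank ℝ (Matrix (Fin n) (Fin n) ℝ) + 1 with hN
  have hexists : ∀ m, ∃ z : Fin N → Matrix (Fin n) (Fin n) ℝ,
      (∀ i, z i ∈ Gamma n ∩ ⋂ k, ⋂ (_ : k ≤ m), JpFam (Bs k)) ∧ ∑ i, z i = X := by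
    intro m
    refine lemA (s := Gamma n ∩ ⋂ k, ⋂ (_ : k ≤ m), JpFam (Bs k)) ⟨zero_mem_Gamma, Set.mem_iInter₂.2 fun k _ => zero_mem_JpFam _⟩
      (fun z hz c hc => ⟨smul_mem_Gamma hz.1 hc,
        Set.mem_iInter₂.2 fun k hk => smul_mem_JpFam (Set.mem_iInter₂.1 hz.2 k hk) hc⟩) ?_
    exact Set.mem_iInter.1 hX m
  choose z hzmem hzsum using hexists
  have hxex : ∀ m i, ∃ x : Fin n → ℝ, z m i = vecMulVec x x := fun m i => (hzmem m i).1
  choose x hx using hxex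
  set t := X.trace with ht
  have htrz : ∀ m i, (z m i).trace = ∑ j, (x m i j) ^ 2 := fun m i => by
    rw [hx m i, vecMulVec_self_trace]
  have htrnn : ∀ m i, 0 ≤ (z m i).trace := fun m i => by
    rw [htrz]; positivity
  have htr : ∀ m i, (z m i).trace ≤ t := by
    intro m i
    have hsum : ∑ i, (z m i).trace = t := by rw [ht, ← hzsum m, Matrix.trace_sum]
    rw [← hsum]
    exact Finset.single_le_sum (fun j _ => htrnn m j) (Finset.mem_univ i)
  have hbound : ∀ m i j, x m i j ∈ Set.Icc (-Real.sqrt t) (Real.sqrt t) := by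
    intro m i j
    have h1 : (x m i j) ^ 2 ≤ t := by
      refine le_trans ?_ (htr m i)
      rw [htrz]
      exact Finset.single_le_sum (fun j' _ => sq_nonneg (x m i j')) (Finset.mem_univ j)
    have h2 : |x m i j| ≤ Real.sqrt t := by
      rw [← Real.sqrt_sq_eq_abs]
      exact Real.sqrt_le_sqrt h1
    exact ⟨neg_le_of_abs_le h2, le_of_abs_le h2⟩
  set C : Set (Fin N → Fin n → ℝ) :=
    Set.univ.pi fun _ => Set.univ.pi fun _ => Set.Icc (-Real.sqrt t) (Real.sqrt t) with hC
  have hCcomp : IsCompact C :=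
    isCompact_univ_pi fun _ => isCompact_univ_pi fun _ => isCompact_Icc
  have hmemC : ∀ m, x m ∈ C := fun m =>
    Set.mem_univ_pi.2 fun i => Set.mem_univ_pi.2 fun j => hbound m i j
  obtain ⟨a, -, φ, hφ, hconv⟩ := hCcomp.tendsto_subseq hmemC
  set w : Fin N → Matrix (Fin n) (Fin n) ℝ := fun i => vecMulVec (a i) (a i) with hw
  have hcont_i : ∀ i, Tendsto (fun m => vecMulVec (x (φ m) i) (x (φ m) i))
      atTop (𝓝 (w i)) := by
    intro i
    have hF : Continuous fun v : Fin N → Fin n → ℝ => vecMulVec (v i) (v i) := by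
      refine continuous_matrix fun r c => ?_
      simp only [vecMulVec_apply]
      exact ((continuous_apply r).comp (continuous_apply i) : Continuous fun v : Fin N → Fin n → ℝ => v i r).mul
        ((continuous_apply c).comp (continuous_apply i))
    exact (hF.tendsto a).comp hconv
  have hsumw : ∑ i, w i = X := by
    have h1 : Tendsto (fun m => ∑ i, vecMulVec (x (φ m) i) (x (φ m) i))
        atTop (𝓝 (∑ i, w i)) := tendsto_finset_sum _ fun i _ => hcont_i i
    have h2 : (fun m => ∑ i, vecMulVec (x (φ m) i) (x (φ m) i)) = fun _ => X :=
      funext fun m => by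
        rw [← hzsum (φ m)]
        exact Finset.sum_congr rfl fun i _ => (hx (φ m) i).symm
    rw [h2] at h1
    exact tendsto_nhds_unique h1 tendsto_const_nhds
  have hwJ : ∀ i, w i ∈ J := by
    intro i
    rw [← hinter]
    refine Set.mem_iInter.2 fun k => ⟨vecMulVec_self_posSemidef _, fun B hB => ?_⟩
    have hT : Tendsto (fun m => (B * vecMulVec (x (φ m) i) (x (φ m) i)).trace)
        atTop (𝓝 ((B * w i).trace)) :=
      (((continuous_const.matrix_mul continuous_id).matrix_trace).tendsto _).comp (hcont_i i)
    refine ge_of_tendsto hT ?_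
    filter_upwards [Filter.eventually_ge_atTop k] with m hm
    have hk : k ≤ φ m := le_trans hm hφ.le_apply
    have hmemJp : z (φ m) i ∈ JpFam (Bs k) := Set.mem_iInter₂.1 (hzmem (φ m) i).2 k hk
    have := hmemJp.2 B hB
    rwa [hx (φ m) i] at this
  -- conclude
  have hNpos : (0 : ℝ) < (N : ℝ) := by
    rw [hN]; exact_mod_cast Nat.succ_pos _
  rw [← hsumw]
  have heq : ∑ i : Fin N, w i = ∑ i : Fin N, ((N : ℝ)⁻¹) • (((N : ℝ)) • w i) := by
    refine Finset.sum_congr rfl fun i _ => ?_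
    rw [smul_smul, inv_mul_cancel₀ hNpos.ne', one_smul]
  rw [heq]
  refine Convex.sum_mem (convex_convexHull ℝ _) (fun i _ => by positivity) ?_ ?_
  · rw [Finset.sum_const, Finset.card_univ, Fintype.card_fin, nsmul_eq_mul,
      mul_inv_cancel₀ hNpos.ne']
  · intro i _
    refine subset_convexHull ℝ _ ?_
    exact ⟨smul_mem_Gamma ⟨a i, rfl⟩ hNpos.le, hJcone _ (hwJ i) _ hNpos.le⟩
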